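/- Let Γ = H ⋊ Λ where H is the integral Heisenberg group H = {(v,w) : v ∈ ℤ², w ∈ (1/2)ℤ} with multiplication (v,w)·(v',w') = (v+v', w+w'+(1/2)det(v,v')), and Λ = ℤ² acts via ϑ(a) = ϑ(b) = M = [[2,3],[1,2]] (acting on the v-coordinate, trivially on w). Then the commutator subgroup [Γ, H] has finite index in H. Consequently the image of H in the abelianization Γ/[Γ,Γ] is finite. -/

import Mathlib

noncomputable section

/-- The integral Heisenberg group `H = {(v, w) : v ∈ ℤ², w ∈ ½ℤ}`.  We represent
`w = wtwice/2` by its double `wtwice ∈ ℤ`, so that the multiplication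
`(v,w)(v',w') = (v + v', w + w' + ½ det(v,v'))` becomes integral:
`wtwice ↦ wtwice + wtwice' + det(v,v')`. -/
structure Heis where
  v1 : ℤ
  v2 : ℤ
  wtwice : ℤ

namespace Heis

/-- Heisenberg multiplication: `(v,w)·(v',w') = (v+v', w+w'+½det(v,v'))`, with the
central coordinate stored as its double. -/
def hmul (a b : Heis) : Heis :=
  ⟨a.v1 + b.v1, a.v2 + b.v2, a.wtwice + b.wtwice + (a.v1 * b.v2 - a.v2 * b.v1)⟩

instance : Group Heis where
  mul := hmul
  one := ⟨0, 0, 0⟩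
  inv a := ⟨-a.v1, -a.v2, -a.wtwice⟩
  mul_assoc a b c := by
    obtain ⟨a1, a2, a3⟩ := a; obtain ⟨b1, b2, b3⟩ := b; obtain ⟨c1, c2, c3⟩ := c
    show hmul (hmul _ _) _ = hmul _ (hmul _ _)
    simp only [hmul, Heis.mk.injEq]
    refine ⟨by ring, by ring, by ring⟩
  one_mul a := by
    obtain ⟨a1, a2, a3⟩ := a
    show hmul ⟨0, 0, 0⟩ _ = _
    simp only [hmul, Heis.mk.injEq]
    refine ⟨by ring, by ring, by ring⟩
  mul_one a := by
    obtain ⟨a1, a2, a3⟩ := a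
    show hmul _ ⟨0, 0, 0⟩ = _
    simp only [hmul, Heis.mk.injEq]
    refine ⟨by ring, by ring, by ring⟩
  inv_mul_cancel a := by
    obtain ⟨a1, a2, a3⟩ := a
    show hmul _ _ = ⟨0, 0, 0⟩
    simp only [hmul, Heis.mk.injEq]
    refine ⟨by ring, by ring, by ring⟩

end Heis

/-- The matrix `M = [[2,3],[1,2]]`, as a unit (it lies in `SL₂(ℤ)`). -/
def Pu : (Matrix (Fin 2) (Fin 2) ℤ)ˣ where
  val := !![2, 3; 1, 2]
  inv := !![2, -3; -1, 2]
  val_inv := by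
    ext i j
    fin_cases i <;> fin_cases j <;>
      simp [Matrix.mul_apply, Fin.sum_univ_two, Matrix.one_apply]
  inv_val := by
    ext i j
    fin_cases i <;> fin_cases j <;>
      simp [Matrix.mul_apply, Fin.sum_univ_two, Matrix.one_apply]

/-- A `2×2` integer matrix acts on the Heisenberg group, linearly on `v` and trivially
on the centre. -/
def act (A : Matrix (Fin 2) (Fin 2) ℤ) (h : Heis) : Heis :=
  ⟨A 0 0 * h.v1 + A 0 1 * h.v2, A 1 0 * h.v1 + A 1 1 * h.v2, h.wtwice⟩

lemma act_act (A B : Matrix (Fin 2) (Fin 2) ℤ) (h : Heis) :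
    act A (act B h) = act (A * B) h := by
  simp only [act, Matrix.mul_apply, Fin.sum_univ_two, Heis.mk.injEq]
  exact ⟨by ring, by ring, trivial⟩

lemma act_one (h : Heis) : act 1 h = h := by
  obtain ⟨a1, a2, a3⟩ := h
  simp [act, Matrix.one_apply]

lemma det_Pu_zpow (n : ℤ) : ((Pu ^ n : (Matrix (Fin 2) (Fin 2) ℤ)ˣ) :
    Matrix (Fin 2) (Fin 2) ℤ).det = 1 := by
  have h1 : Units.map Matrix.detMonoidHom Pu = 1 := by
    ext
    show (Pu : Matrix (Fin 2) (Fin 2) ℤ).det = 1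
    simp [Pu, Matrix.det_fin_two_of]
  have h2 : Units.map Matrix.detMonoidHom (Pu ^ n) = 1 := by
    rw [map_zpow, h1, one_zpow]
  have h3 := congrArg Units.val h2
  simp only [Units.coe_map, Matrix.coe_detMonoidHom, MonoidHom.coe_coe,
    Units.val_one] at h3
  exact h3

lemma act_mul (n : ℤ) (a b : Heis) :
    act ((Pu ^ n : (Matrix (Fin 2) (Fin 2) ℤ)ˣ) : Matrix (Fin 2) (Fin 2) ℤ) (a * b) =
      act ((Pu ^ n : (Matrix (Fin 2) (Fin 2) ℤ)ˣ) : Matrix (Fin 2) (Fin 2) ℤ) a *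
      act ((Pu ^ n : (Matrix (Fin 2) (Fin 2) ℤ)ˣ) : Matrix (Fin 2) (Fin 2) ℤ) b := by
  set A := ((Pu ^ n : (Matrix (Fin 2) (Fin 2) ℤ)ˣ) : Matrix (Fin 2) (Fin 2) ℤ) with hA
  have hdet : A 0 0 * A 1 1 - A 0 1 * A 1 0 = 1 := by
    have h := det_Pu_zpow n
    rw [Matrix.det_fin_two] at h
    exact h
  obtain ⟨a1, a2, a3⟩ := a; obtain ⟨b1, b2, b3⟩ := b
  show act A (Heis.hmul _ _) = Heis.hmul (act A _) (act A _)
  simp only [act, Heis.hmul, Heis.mk.injEq]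
  refine ⟨by ring, by ring, ?_⟩
  linear_combination (a2 * b1 - a1 * b2) * hdet

/-- The automorphism of the Heisenberg group given by the `n`-th power of `M`. -/
def heisAut (n : ℤ) : Heis ≃* Heis where
  toFun := act ((Pu ^ n : (Matrix (Fin 2) (Fin 2) ℤ)ˣ) : Matrix (Fin 2) (Fin 2) ℤ)
  invFun := act ((Pu ^ (-n) : (Matrix (Fin 2) (Fin 2) ℤ)ˣ) : Matrix (Fin 2) (Fin 2) ℤ)
  left_inv h := by
    rw [act_act, ← Units.val_mul, ← zpow_add, neg_add_cancel, zpow_zero, Units.val_one,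
      act_one]
  right_inv h := by
    rw [act_act, ← Units.val_mul, ← zpow_add, add_neg_cancel, zpow_zero, Units.val_one,
      act_one]
  map_mul' := act_mul n

lemma heisAut_add (m n : ℤ) : heisAut (m + n) = heisAut m * heisAut n := by
  ext h
  show act _ h = act _ (act _ h)
  rw [act_act, ← Units.val_mul, ← zpow_add]

/-- The action of `Λ = ℤ²` on the Heisenberg group: both generators `a`, `b` of `ℤ²`
act via the matrix `M = [[2,3],[1,2]]`, so `(m, n)` acts via `M^(m+n)`. -/
def phi : Multiplicative (ℤ × ℤ) →* MulAut Heis :=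
  MonoidHom.mk' (fun g => heisAut (g.toAdd.1 + g.toAdd.2))
    (by
      intro x y
      show heisAut _ = _
      rw [show (x * y).toAdd = x.toAdd + y.toAdd from rfl]
      have : (x.toAdd.1 + y.toAdd.1) + (x.toAdd.2 + y.toAdd.2) =
          (x.toAdd.1 + x.toAdd.2) + (y.toAdd.1 + y.toAdd.2) := by ring
      rw [show (x.toAdd + y.toAdd).1 = x.toAdd.1 + y.toAdd.1 from rfl,
        show (x.toAdd + y.toAdd).2 = x.toAdd.2 + y.toAdd.2 from rfl, this,
        heisAut_add])

/-- `Γ = H ⋊ Λ`. -/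
abbrev Gam : Type := Heis ⋊[phi] Multiplicative (ℤ × ℤ)

/-- The copy of the Heisenberg group `H` inside `Γ`. -/
def HinGam : Subgroup Gam := (SemidirectProduct.inl : Heis →* Gam).range

namespace Stmt14Aux

open scoped commutatorElement

lemma heis_mul_def (a b : Heis) : a * b = Heis.hmul a b := rfl

lemma heis_inv_def (a : Heis) : a⁻¹ = ⟨-a.v1, -a.v2, -a.wtwice⟩ := rfl

lemma heis_one_def : (1 : Heis) = ⟨0, 0, 0⟩ := rfl

/-- The commutator subgroup `⁅Γ, H⁆`, pulled back to `Heis`. -/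
def S : Subgroup Heis :=
  (⁅(⊤ : Subgroup Gam), HinGam⁆).comap (SemidirectProduct.inl : Heis →* Gam)

lemma mem_S_iff (h : Heis) :
    h ∈ S ↔ (SemidirectProduct.inl h : Gam) ∈ ⁅(⊤ : Subgroup Gam), HinGam⁆ :=
  Iff.rfl

lemma inl_commutator_mem (a b : Heis) :
    (SemidirectProduct.inl (⁅a, b⁆) : Gam) ∈ ⁅(⊤ : Subgroup Gam), HinGam⁆ := by
  rw [map_commutatorElement]
  exact Subgroup.commutator_mem_commutator (Subgroup.mem_top _) ⟨b, rfl⟩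

lemma c_mem : (⟨0, 0, 2⟩ : Heis) ∈ S := by
  have h := inl_commutator_mem ⟨1, 0, 0⟩ ⟨0, 1, 0⟩
  have : (⁅(⟨1, 0, 0⟩ : Heis), (⟨0, 1, 0⟩ : Heis)⁆) = (⟨0, 0, 2⟩ : Heis) := by
    simp only [commutatorElement_def, heis_mul_def, heis_inv_def, Heis.hmul]
    norm_num
  rwa [this] at h

/-- The generator of `Λ` acting via `M`. -/
def gam : Multiplicative (ℤ × ℤ) := Multiplicative.ofAdd ((1 : ℤ), (0 : ℤ))

lemma phi_gam (n : Heis) : phi gam n = act !![2, 3; 1, 2] n := by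
  show act ((Pu ^ ((1 : ℤ) + 0) : (Matrix (Fin 2) (Fin 2) ℤ)ˣ) :
      Matrix (Fin 2) (Fin 2) ℤ) n = _
  norm_num [Pu]

lemma conj_commutator_mem (n : Heis) :
    phi gam n * n⁻¹ ∈ S := by
  rw [mem_S_iff]
  have key : (SemidirectProduct.inl (phi gam n * n⁻¹) : Gam) =
      ⁅(SemidirectProduct.inr gam : Gam), SemidirectProduct.inl n⁆ := by
    have hinv : (SemidirectProduct.inr gam : Gam)⁻¹ = SemidirectProduct.inr gam⁻¹ :=
      (map_inv _ _).symm
    rw [commutatorElement_def, hinv, ← SemidirectProduct.inl_aut, ← map_inv, ← map_mul]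
  rw [key]
  exact Subgroup.commutator_mem_commutator (Subgroup.mem_top _) ⟨n, rfl⟩

lemma g1_mem : (⟨1, 1, 1⟩ : Heis) ∈ S := by
  have h := conj_commutator_mem ⟨1, 0, 0⟩
  rwa [show phi gam (⟨1, 0, 0⟩ : Heis) * (⟨1, 0, 0⟩ : Heis)⁻¹ = (⟨1, 1, 1⟩ : Heis) by
    rw [phi_gam]
    simp only [act, heis_mul_def, heis_inv_def, Heis.hmul]
    norm_num [Matrix.cons_val_zero, Matrix.cons_val_one]] at h

lemma g2_mem : (⟨3, 1, -3⟩ : Heis) ∈ S := by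
  have h := conj_commutator_mem ⟨0, 1, 0⟩
  rwa [show phi gam (⟨0, 1, 0⟩ : Heis) * (⟨0, 1, 0⟩ : Heis)⁻¹ = (⟨3, 1, -3⟩ : Heis) by
    rw [phi_gam]
    simp only [act, heis_mul_def, heis_inv_def, Heis.hmul]
    norm_num [Matrix.cons_val_zero, Matrix.cons_val_one]] at h

lemma diag_mem : ∀ a : ℤ, (⟨a, a, a⟩ : Heis) ∈ S := by
  intro a
  induction a using Int.induction_on with
  | zero => exact S.one_mem
  | succ k ih =>
    have := S.mul_mem ih g1_mem
    rwa [show (⟨(k : ℤ), k, k⟩ : Heis) * ⟨1, 1, 1⟩ = ⟨(k : ℤ) + 1, k + 1, k + 1⟩ by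
      simp only [heis_mul_def, Heis.hmul]; congr 1; ring] at this
  | pred k ih =>
    have := S.mul_mem ih (S.inv_mem g1_mem)
    rwa [show (⟨(-k : ℤ), -k, -k⟩ : Heis) * (⟨1, 1, 1⟩ : Heis)⁻¹ =
        ⟨(-k : ℤ) - 1, -k - 1, -k - 1⟩ by
      simp only [heis_mul_def, heis_inv_def, Heis.hmul]; congr 1 <;> ring] at this

lemma skew_mem : ∀ b : ℤ, (⟨3 * b, b, -3 * b⟩ : Heis) ∈ S := by
  intro b
  induction b using Int.induction_on with
  | zero =>
    have : (⟨3 * (0 : ℤ), 0, -3 * 0⟩ : Heis) = 1 := by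
      rw [heis_one_def]; norm_num
    rw [this]; exact S.one_mem
  | succ k ih =>
    have := S.mul_mem ih g2_mem
    rwa [show (⟨3 * (k : ℤ), k, -3 * k⟩ : Heis) * ⟨3, 1, -3⟩ =
        ⟨3 * ((k : ℤ) + 1), k + 1, -3 * (k + 1)⟩ by
      simp only [heis_mul_def, Heis.hmul]; congr 1 <;> ring] at this
  | pred k ih =>
    have := S.mul_mem ih (S.inv_mem g2_mem)
    rwa [show (⟨3 * (-k : ℤ), -k, -3 * -k⟩ : Heis) * (⟨3, 1, -3⟩ : Heis)⁻¹ =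
        ⟨3 * ((-k : ℤ) - 1), -k - 1, -3 * (-k - 1)⟩ by
      simp only [heis_mul_def, heis_inv_def, Heis.hmul]; congr 1 <;> ring] at this

lemma cent_mem : ∀ k : ℤ, (⟨0, 0, 2 * k⟩ : Heis) ∈ S := by
  intro k
  induction k using Int.induction_on with
  | zero =>
    have : (⟨(0 : ℤ), 0, 2 * 0⟩ : Heis) = 1 := by rw [heis_one_def]; norm_num
    rw [this]; exact S.one_mem
  | succ k ih =>
    have := S.mul_mem ih c_mem
    rwa [show (⟨(0 : ℤ), 0, 2 * k⟩ : Heis) * ⟨0, 0, 2⟩ = ⟨(0 : ℤ), 0, 2 * (k + 1)⟩ by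
      simp only [heis_mul_def, Heis.hmul]; congr 1 <;> ring] at this
  | pred k ih =>
    have := S.mul_mem ih (S.inv_mem c_mem)
    rwa [show (⟨(0 : ℤ), 0, 2 * -k⟩ : Heis) * (⟨0, 0, 2⟩ : Heis)⁻¹ =
        ⟨(0 : ℤ), 0, 2 * (-k - 1)⟩ by
      simp only [heis_mul_def, heis_inv_def, Heis.hmul]; congr 1 <;> ring] at this

/-- The finite-index subgroup `T = {(x,y,z) : x ≡ y ≡ z mod 2}` of `Heis`. -/
def T : Subgroup Heis where
  carrier := {h | 2 ∣ h.v1 - h.v2 ∧ 2 ∣ h.wtwice - h.v2}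
  one_mem' := by simp [heis_one_def]
  mul_mem' := by
    rintro ⟨x, y, z⟩ ⟨x', y', z'⟩ ⟨h1, h2⟩ ⟨h1', h2'⟩
    have h1 : (2:ℤ) ∣ x - y := h1
    have h2 : (2:ℤ) ∣ z - y := h2
    have h1' : (2:ℤ) ∣ x' - y' := h1'
    have h2' : (2:ℤ) ∣ z' - y' := h2'
    have hD : (2:ℤ) ∣ x * y' - y * x' := by
      have he : x * y' - y * x' = (x - y) * y' + y * (y' - x') := by ring
      rw [he]
      exact dvd_add (Dvd.dvd.mul_right h1 _)
        (Dvd.dvd.mul_left (by omega : (2:ℤ) ∣ y' - x') _)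
    obtain ⟨d, hd⟩ := hD
    refine ⟨?_, ?_⟩
    · show (2:ℤ) ∣ (x + x') - (y + y')
      omega
    · show (2:ℤ) ∣ (z + z' + (x * y' - y * x')) - (y + y')
      omega
  inv_mem' := by
    rintro ⟨x, y, z⟩ ⟨h1, h2⟩
    have h1 : (2:ℤ) ∣ x - y := h1
    have h2 : (2:ℤ) ∣ z - y := h2
    refine ⟨?_, ?_⟩
    · show (2:ℤ) ∣ -x - -y
      omega
    · show (2:ℤ) ∣ -z - -y
      omega

instance T_normal : T.Normal := by
  constructor
  rintro ⟨x, y, z⟩ ⟨h1, h2⟩ ⟨a, b, c⟩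
  have h1 : (2:ℤ) ∣ x - y := h1
  have h2 : (2:ℤ) ∣ z - y := h2
  have key : (⟨a, b, c⟩ : Heis) * ⟨x, y, z⟩ * (⟨a, b, c⟩ : Heis)⁻¹ =
      ⟨x, y, z + 2 * (a * y - b * x)⟩ := by
    simp only [heis_mul_def, heis_inv_def, Heis.hmul, Heis.mk.injEq]
    refine ⟨by ring, by ring, by ring⟩
  rw [key]
  obtain ⟨m, hm⟩ := h2
  refine ⟨h1, ⟨m + (a * y - b * x), ?_⟩⟩
  show z + 2 * (a * y - b * x) - y = 2 * (m + (a * y - b * x))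
  linarith

lemma T_le_S : T ≤ S := by
  rintro ⟨x, y, z⟩ ⟨h1, h2⟩
  have h1 : (2:ℤ) ∣ x - y := h1
  have h2 : (2:ℤ) ∣ z - y := h2
  obtain ⟨b, hb⟩ := h1
  obtain ⟨m, hm⟩ := h2
  set a : ℤ := y - b with ha
  have hk : (2:ℤ) ∣ z - (a - 3 * b - 2 * a * b) := ⟨m + 2 * b + a * b, by
    simp only [ha]; linarith [hm]⟩
  obtain ⟨k, hkk⟩ := hk
  have key : (⟨x, y, z⟩ : Heis) = ⟨a, a, a⟩ * ⟨3 * b, b, -3 * b⟩ * ⟨0, 0, 2 * k⟩ := by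
    simp only [heis_mul_def, Heis.hmul, Heis.mk.injEq]
    refine ⟨by omega, by omega, by linarith [hkk]⟩
  rw [key]
  exact S.mul_mem (S.mul_mem (diag_mem a) (skew_mem b)) (cent_mem k)

lemma finite_quot_T : Finite (Heis ⧸ T) := by
  have hsurj : Function.Surjective
      (fun p : ZMod 2 × ZMod 2 × ZMod 2 =>
        (QuotientGroup.mk (⟨(p.1.val : ℤ), (p.2.1.val : ℤ), (p.2.2.val : ℤ)⟩ : Heis) :
          Heis ⧸ T)) := by
    intro q
    obtain ⟨⟨x, y, z⟩, rfl⟩ := QuotientGroup.mk_surjective q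
    refine ⟨((x : ZMod 2), (y : ZMod 2), (z : ZMod 2)), ?_⟩
    simp only
    rw [ZMod.val_intCast, ZMod.val_intCast, ZMod.val_intCast]
    push_cast
    apply (QuotientGroup.eq (s := T)).mpr
    have key : (⟨(x % 2 : ℤ), (y % 2 : ℤ), (z % 2 : ℤ)⟩ : Heis)⁻¹ * ⟨x, y, z⟩ =
        ⟨x - x % 2, y - y % 2, z - z % 2 + (-(x % 2) * y - -(y % 2) * x)⟩ := by
      simp only [heis_inv_def, heis_mul_def, Heis.hmul, Heis.mk.injEq]
      refine ⟨by ring, by ring, by ring⟩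
    rw [key]
    have h1 : (2:ℤ) ∣ (x % 2) * y - x * y := by
      have he : (x % 2) * y - x * y = (x % 2 - x) * y := by ring
      rw [he]
      exact Dvd.dvd.mul_right (by omega) _
    have h2 : (2:ℤ) ∣ (y % 2) * x - y * x := by
      have he : (y % 2) * x - y * x = (y % 2 - y) * x := by ring
      rw [he]
      exact Dvd.dvd.mul_right (by omega) _
    refine ⟨?_, ?_⟩
    · show (2:ℤ) ∣ (x - x % 2) - (y - y % 2)
      omega
    show (2:ℤ) ∣ z - z % 2 + (-(x % 2) * y - -(y % 2) * x) - (y - y % 2)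
    have e : z - z % 2 + (-(x % 2) * y - -(y % 2) * x) - (y - y % 2) =
        (z - z % 2) - ((x % 2) * y - x * y) + ((y % 2) * x - y * x) - (y - y % 2)
          - (x * y - y * x) := by ring
    rw [e]
    obtain ⟨p, hp⟩ := h1
    obtain ⟨q, hq⟩ := h2
    rw [hp, hq, show (x : ℤ) * y - y * x = 0 by ring]
    omega
  exact Finite.of_surjective _ hsurj

instance HinGam_normal : HinGam.Normal := by
  have h : HinGam = (SemidirectProduct.rightHom : Gam →* Multiplicative (ℤ × ℤ)).ker :=
    SemidirectProduct.range_inl_eq_ker_rightHom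
  rw [h]
  exact MonoidHom.normal_ker _

/-- `Heis → HinGam`. -/
def psi : Heis →* HinGam :=
  (SemidirectProduct.inl : Heis →* Gam).codRestrict HinGam fun h => ⟨h, rfl⟩

lemma psi_surjective : Function.Surjective psi := by
  rintro ⟨g, h, rfl⟩
  exact ⟨h, rfl⟩

end Stmt14Aux

/-- For `Γ = H ⋊ Λ` as above (the integral Heisenberg group `H` with
`Λ = ℤ²` acting through `ϑ(a) = ϑ(b) = M = [[2,3],[1,2]]`), the commutator subgroup
`[Γ, H]` has finite index in `H`; consequently the image of `H` in the abelianization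
`Γ/[Γ,Γ]` is finite. -/
theorem stmt14 :
    (⁅(⊤ : Subgroup Gam), HinGam⁆.relIndex HinGam ≠ 0) ∧
    Finite ((Abelianization.of.comp (SemidirectProduct.inl : Heis →* Gam)).range) := by
  open Stmt14Aux in
  have hfin : Finite (Heis ⧸ Stmt14Aux.T) := Stmt14Aux.finite_quot_T
  constructor
  · -- relindex is the index of the pulled-back subgroup in `HinGam`
    have hle : Stmt14Aux.T ≤
        ((⁅(⊤ : Subgroup Gam), HinGam⁆).subgroupOf HinGam).comap Stmt14Aux.psi := by
      intro t ht
      simp only [Subgroup.mem_comap, Subgroup.mem_subgroupOf]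
      exact Stmt14Aux.T_le_S ht
    have hsurj : Function.Surjective
        (QuotientGroup.map Stmt14Aux.T
          ((⁅(⊤ : Subgroup Gam), HinGam⁆).subgroupOf HinGam) Stmt14Aux.psi hle) := by
      intro q
      obtain ⟨x, rfl⟩ := QuotientGroup.mk_surjective q
      obtain ⟨h, rfl⟩ := Stmt14Aux.psi_surjective x
      exact ⟨QuotientGroup.mk h, rfl⟩
    have : Finite (HinGam ⧸ (⁅(⊤ : Subgroup Gam), HinGam⁆).subgroupOf HinGam) :=
      Finite.of_surjective _ hsurj
    exact Subgroup.index_ne_zero_of_finite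
  · set f : Heis →* Abelianization Gam :=
      Abelianization.of.comp (SemidirectProduct.inl : Heis →* Gam) with hf
    have hker : ∀ t ∈ Stmt14Aux.T, f.rangeRestrict t = 1 := by
      intro t ht
      have h1 : (SemidirectProduct.inl t : Gam) ∈ commutator Gam := by
        have hmono : ⁅(⊤ : Subgroup Gam), HinGam⁆ ≤ ⁅(⊤ : Subgroup Gam), ⊤⁆ :=
          Subgroup.commutator_mono le_rfl le_top
        rw [commutator_def]
        exact hmono (Stmt14Aux.T_le_S ht)
      have h2 : f t = 1 := (QuotientGroup.eq_one_iff _).mpr h1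
      ext
      simpa using h2
    have hsurj : Function.Surjective (QuotientGroup.lift Stmt14Aux.T f.rangeRestrict hker) := by
      intro y
      obtain ⟨h, rfl⟩ := f.rangeRestrict_surjective y
      exact ⟨QuotientGroup.mk h, rfl⟩
    exact Finite.of_surjective _ hsurj

end
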